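/- Let M be a maximal independent set of the Kneser graph Γ_d on chambers of PG(d,q), let (P,f,H) be a chamber of M, and suppose the coflag f has M-weight one. Then there exist chambers (Q₁,g₁,R₁) and (Q₂,g₂,R₂) in M such that: g₁ and g₂ are both f-opposite to f; P ≤ R₁ and Q₁ is not contained in H; and P is not contained in R₂ and Q₂ ≤ H. -/

import Mathlib

/-- A chamber of `PG(d,q)`: a tuple `(S₀,…,S_{d−1})` of subspaces of `F^{d+1}` with
`S_i` of linear dimension `i+1` and `S_i ≤ S_{i+1}`. -/
def IsChamberD (F : Type) [Field F] (d : ℕ) (C : Fin d → Submodule F (Fin (d+1) → F)) : Prop :=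
  (∀ i : Fin d, Module.finrank F ↥(C i) = i.val + 1) ∧ ∀ i j : Fin d, i ≤ j → C i ≤ C j

/-- Two chambers of `PG(d,q)` are opposite: `S_i ∩ R_{d−1−i} = 0` for all `i`. -/
def OppD (F : Type) [Field F] (d : ℕ) (C D : Fin d → Submodule F (Fin (d+1) → F)) : Prop :=
  ∀ i : Fin d, C i ⊓ D ⟨d - 1 - i.val, by have := i.isLt; omega⟩ = ⊥

/-- An independent set of the Kneser graph `Γ_d`: a set of pairwise non-opposite chambers. -/
def IndepD (F : Type) [Field F] (d : ℕ)
    (M : Set (Fin d → Submodule F (Fin (d+1) → F))) : Prop :=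
  (∀ C ∈ M, IsChamberD F d C) ∧ ∀ C ∈ M, ∀ D ∈ M, ¬ OppD F d C D

/-- A maximal independent set of `Γ_d`. -/
def MaxIndepD (F : Type) [Field F] (d : ℕ)
    (M : Set (Fin d → Submodule F (Fin (d+1) → F))) : Prop :=
  IndepD F d M ∧
  ∀ C : Fin d → Submodule F (Fin (d+1) → F),
    IsChamberD F d C → (∀ D ∈ M, ¬ OppD F d C D) → C ∈ M

/-- A coflag of `PG(d,q)`: a tuple `(S₁,…,S_{d−2})` (re-indexed by `Fin (d-2)`) of
subspaces of `F^{d+1}`, the `i`-th entry of linear dimension `i+2`, nested. -/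
def IsCoflagD (F : Type) [Field F] (d : ℕ)
    (f : Fin (d-2) → Submodule F (Fin (d+1) → F)) : Prop :=
  (∀ i, Module.finrank F ↥(f i) = i.val + 2) ∧ ∀ i j, i ≤ j → f i ≤ f j

/-- Two coflags are f-opposite: each pair of entries intersects trivially or spans. -/
def FOppD (F : Type) [Field F] (d : ℕ)
    (f g : Fin (d-2) → Submodule F (Fin (d+1) → F)) : Prop :=
  ∀ i j, f i ⊓ g j = ⊥ ∨ f i ⊔ g j = ⊤

/-- The coflag `(S₁,…,S_{d−2})` of a chamber `(S₀,…,S_{d−1})`. -/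
def coflagOf (F : Type) [Field F] {d : ℕ} (hd : 3 ≤ d)
    (C : Fin d → Submodule F (Fin (d+1) → F)) :
    Fin (d-2) → Submodule F (Fin (d+1) → F) :=
  fun i => C ⟨i.val + 1, by have := i.isLt; omega⟩

/-- The point `S₀` of a chamber. -/
def pointOf (F : Type) [Field F] {d : ℕ} (hd : 3 ≤ d)
    (C : Fin d → Submodule F (Fin (d+1) → F)) : Submodule F (Fin (d+1) → F) :=
  C ⟨0, by omega⟩

/-- The hyperplane `S_{d−1}` of a chamber. -/
def hypOf (F : Type) [Field F] {d : ℕ} (hd : 3 ≤ d)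
    (C : Fin d → Submodule F (Fin (d+1) → F)) : Submodule F (Fin (d+1) → F) :=
  C ⟨d - 1, by omega⟩

/-- The tuple `(P, f, H)` written as a chamber-shaped tuple `(S₀,…,S_{d−1})`. -/
def assembleD (F : Type) [Field F] {d : ℕ} (hd : 3 ≤ d)
    (P : Submodule F (Fin (d+1) → F)) (f : Fin (d-2) → Submodule F (Fin (d+1) → F))
    (H : Submodule F (Fin (d+1) → F)) : Fin d → Submodule F (Fin (d+1) → F) :=
  fun i =>
    if h0 : i.val = 0 then P
    else if h1 : i.val = d - 1 then H
    else f ⟨i.val - 1, by have := i.isLt; omega⟩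

/-- The `M`-weight of a coflag `f`: the number of chambers of `M` whose coflag is `f`. -/
noncomputable def weightD (F : Type) [Field F] {d : ℕ} (hd : 3 ≤ d)
    (M : Set (Fin d → Submodule F (Fin (d+1) → F)))
    (f : Fin (d-2) → Submodule F (Fin (d+1) → F)) : ℕ :=
  Set.ncard {C | C ∈ M ∧ coflagOf F hd C = f}

/-- The `M`-weight of an incident coflag–hyperplane pair `(f,H)`: the number of chambers
of `M` containing both `f` and `H`. -/
noncomputable def weightFHD (F : Type) [Field F] {d : ℕ} (hd : 3 ≤ d)
    (M : Set (Fin d → Submodule F (Fin (d+1) → F)))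
    (f : Fin (d-2) → Submodule F (Fin (d+1) → F))
    (H : Submodule F (Fin (d+1) → F)) : ℕ :=
  Set.ncard {C | C ∈ M ∧ coflagOf F hd C = f ∧ hypOf F hd C = H}

open Module Submodule

section Helpers

variable {F : Type} [Field F] {d : ℕ}

lemma my_dim1_le {P R : Submodule F (Fin (d+1) → F)} (hP : finrank F P = 1)
    (h : P ⊓ R ≠ ⊥) : P ≤ R := by
  have h1 : finrank F ↥(P ⊓ R) ≠ 0 := fun hz => h (Submodule.finrank_eq_zero.mp hz)
  have h2 : finrank F ↥(P ⊓ R) ≤ finrank F P := Submodule.finrank_mono inf_le_left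
  have h3 : P ⊓ R = P := Submodule.eq_of_le_of_finrank_le inf_le_left (by omega)
  exact h3 ▸ inf_le_right

lemma my_dim1_not_le {P R : Submodule F (Fin (d+1) → F)} (hP : finrank F P = 1)
    (h : P ⊓ R = ⊥) : ¬ P ≤ R := by
  intro hle
  rw [inf_eq_left.mpr hle] at h
  rw [h] at hP
  simp [finrank_bot] at hP

lemma my_oppD_symm {C D : Fin d → Submodule F (Fin (d+1) → F)} (h : OppD F d C D) :
    OppD F d D C := by
  intro i
  have h2 := h ⟨d - 1 - i.val, by have := i.isLt; omega⟩
  have hi : (⟨d - 1 - (d - 1 - i.val), by omega⟩ : Fin d) = i :=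
    Fin.ext (by have := i.isLt; simp; omega)
  rw [hi] at h2
  rw [inf_comm]
  exact h2

lemma my_assembleD_zero (hd : 3 ≤ d) (P : Submodule F (Fin (d+1) → F)) (f) (H) :
    assembleD F hd P f H ⟨0, by omega⟩ = P := by simp [assembleD]

lemma my_assembleD_last (hd : 3 ≤ d) (P : Submodule F (Fin (d+1) → F)) (f) (H) :
    assembleD F hd P f H ⟨d - 1, by omega⟩ = H := by
  simp [assembleD, show d - 1 ≠ 0 by omega]

lemma my_assembleD_mid (hd : 3 ≤ d) (P : Submodule F (Fin (d+1) → F)) (f) (H)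
    (i : Fin d) (h0 : i.val ≠ 0) (h1 : i.val ≠ d - 1) :
    assembleD F hd P f H i = f ⟨i.val - 1, by have := i.isLt; omega⟩ := by
  simp [assembleD, h0, h1]

lemma my_coflagOf_assembleD (hd : 3 ≤ d) (P : Submodule F (Fin (d+1) → F)) (f) (H) :
    coflagOf F hd (assembleD F hd P f H) = f := by
  funext i
  have hlt := i.isLt
  rw [coflagOf, my_assembleD_mid hd P f H _ (by simp) (by simp; omega)]
  exact congrArg f (Fin.ext (by simp))

lemma my_pointOf_assembleD (hd : 3 ≤ d) (P : Submodule F (Fin (d+1) → F)) (f) (H) :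
    pointOf F hd (assembleD F hd P f H) = P := my_assembleD_zero hd P f H

lemma my_hypOf_assembleD (hd : 3 ≤ d) (P : Submodule F (Fin (d+1) → F)) (f) (H) :
    hypOf F hd (assembleD F hd P f H) = H := my_assembleD_last hd P f H

lemma my_isChamberD_assembleD (hd : 3 ≤ d) {P H : Submodule F (Fin (d+1) → F)}
    {f : Fin (d-2) → Submodule F (Fin (d+1) → F)}
    (hP : finrank F P = 1) (hH : finrank F H = d)
    (hf : IsCoflagD F d f)
    (hPf : P ≤ f ⟨0, by omega⟩) (hfH : f ⟨d - 3, by omega⟩ ≤ H) :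
    IsChamberD F d (assembleD F hd P f H) := by
  have hfm := hf.2
  have hfd := hf.1
  have key : ∀ i : Fin (d-2), f i ≤ H := fun i =>
    le_trans (hfm i ⟨d - 3, by omega⟩ (by simp [Fin.le_def]; have := i.isLt; omega)) hfH
  have keyP : ∀ i : Fin (d-2), P ≤ f i := fun i =>
    le_trans hPf (hfm ⟨0, by omega⟩ i (by simp [Fin.le_def]))
  constructor
  · intro i
    by_cases h0 : i.val = 0
    · rw [show i = (⟨0, by omega⟩ : Fin d) from Fin.ext h0, my_assembleD_zero]
      simp [hP, h0]
    · by_cases h1 : i.val = d - 1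
      · rw [show i = (⟨d-1, by omega⟩ : Fin d) from Fin.ext h1, my_assembleD_last]
        show finrank F ↥H = d - 1 + 1
        rw [show d - 1 + 1 = d by omega]
        exact hH
      · rw [my_assembleD_mid hd P f H i h0 h1, hfd]
        have := i.isLt; simp; omega
  · intro i j hij
    rw [Fin.le_def] at hij
    have hi := i.isLt; have hj := j.isLt
    by_cases hi0 : i.val = 0
    · rw [show i = (⟨0, by omega⟩ : Fin d) from Fin.ext hi0, my_assembleD_zero]
      by_cases hj0 : j.val = 0
      · rw [show j = (⟨0, by omega⟩ : Fin d) from Fin.ext hj0, my_assembleD_zero]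
      · by_cases hj1 : j.val = d - 1
        · rw [show j = (⟨d-1, by omega⟩ : Fin d) from Fin.ext hj1, my_assembleD_last]
          exact le_trans (keyP ⟨0, by omega⟩) (key ⟨0, by omega⟩)
        · rw [my_assembleD_mid hd P f H j hj0 hj1]
          exact keyP _
    · by_cases hi1 : i.val = d - 1
      · have : j.val = d - 1 := by omega
        rw [show i = (⟨d-1, by omega⟩ : Fin d) from Fin.ext hi1,
            show j = (⟨d-1, by omega⟩ : Fin d) from Fin.ext this, my_assembleD_last]
      · rw [my_assembleD_mid hd P f H i hi0 hi1]
        by_cases hj1 : j.val = d - 1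
        · rw [show j = (⟨d-1, by omega⟩ : Fin d) from Fin.ext hj1, my_assembleD_last]
          exact key _
        · rw [my_assembleD_mid hd P f H j (by omega) hj1]
          exact hfm _ _ (by simp [Fin.le_def]; omega)

lemma my_fOpp_of_opp (hd : 3 ≤ d) {C D : Fin d → Submodule F (Fin (d+1) → F)}
    (hC : IsChamberD F d C) (hD : IsChamberD F d D)
    (h : OppD F d D C) : FOppD F d (coflagOf F hd D) (coflagOf F hd C) := by
  intro i j
  have hi := i.isLt; have hj := j.isLt
  have hi1 : i.val + 1 < d := by omega
  have hj1 : j.val + 1 < d := by omega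
  have hz := h ⟨i.val + 1, hi1⟩
  simp only at hz
  by_cases hc : j.val + 1 ≤ d - 1 - (i.val + 1)
  · left
    have hle : C ⟨j.val + 1, hj1⟩ ≤ C ⟨d - 1 - (i.val + 1), by omega⟩ :=
      hC.2 _ _ (by simp [Fin.le_def]; omega)
    rw [coflagOf, coflagOf]
    exact le_bot_iff.mp (le_trans (inf_le_inf_left _ hle) (le_of_eq hz))
  · right
    have hle : C ⟨d - 1 - (i.val + 1), by omega⟩ ≤ C ⟨j.val + 1, hj1⟩ :=
      hC.2 _ _ (by simp [Fin.le_def]; omega)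
    have htop : D ⟨i.val + 1, hi1⟩ ⊔ C ⟨d - 1 - (i.val + 1), by omega⟩ = ⊤ := by
      apply Submodule.eq_top_of_finrank_eq
      have heq := Submodule.finrank_sup_add_finrank_inf_eq
        (D ⟨i.val + 1, hi1⟩) (C ⟨d - 1 - (i.val + 1), by omega⟩)
      rw [hz, finrank_bot] at heq
      rw [hD.1, hC.1] at heq
      rw [Module.finrank_fin_fun]
      simp at heq
      omega
    rw [coflagOf, coflagOf]
    rw [eq_top_iff]
    calc (⊤ : Submodule F (Fin (d+1) → F)) = _ := htop.symm
      _ ≤ _ := sup_le_sup_left hle _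

lemma my_inf_span_eq_bot {W : Submodule F (Fin (d+1) → F)} {v : Fin (d+1) → F}
    (hv : v ∉ W) : W ⊓ Submodule.span F {v} = ⊥ := by
  rw [eq_bot_iff]
  rintro x ⟨hxW, hxs⟩
  obtain ⟨c, rfl⟩ := Submodule.mem_span_singleton.mp hxs
  rcases eq_or_ne c 0 with rfl | hc
  · simp
  · exact absurd (W.smul_mem c⁻¹ hxW) (by simpa [smul_smul, inv_mul_cancel₀ hc] using hv)

end Helpers



set_option maxHeartbeats 1000000 in
/-- If `(P,f,H) ∈ M` and `f` has `M`-weight one, then there are chambers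
`(Q₁,g₁,R₁)` and `(Q₂,g₂,R₂)` in `M` with `g₁`, `g₂` f-opposite to `f`, `P ≤ R₁`,
`Q₁ ≰ H`, `P ≰ R₂` and `Q₂ ≤ H`. -/
theorem statement_9 (q : ℕ) (F : Type) [Field F] [Fintype F]
    (hq : Fintype.card F = q) (d : ℕ) (hd : 3 ≤ d)
    (M : Set (Fin d → Submodule F (Fin (d+1) → F))) (hM : MaxIndepD F d M)
    (P H : Submodule F (Fin (d+1) → F))
    (f : Fin (d-2) → Submodule F (Fin (d+1) → F))
    (hmem : assembleD F hd P f H ∈ M) (hw : weightD F hd M f = 1) :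
    ∃ C₁ ∈ M, ∃ C₂ ∈ M,
      FOppD F d (coflagOf F hd C₁) f ∧ FOppD F d (coflagOf F hd C₂) f ∧
      P ≤ hypOf F hd C₁ ∧ ¬ pointOf F hd C₁ ≤ H ∧
      ¬ P ≤ hypOf F hd C₂ ∧ pointOf F hd C₂ ≤ H := by
  have hcham : IsChamberD F d (assembleD F hd P f H) := hM.1.1 _ hmem
  -- basic dimension facts
  have hP1 : finrank F P = 1 := by
    have := hcham.1 ⟨0, by omega⟩
    rwa [my_assembleD_zero] at this
  have hHd : finrank F H = d := by
    have := hcham.1 ⟨d - 1, by omega⟩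
    rw [my_assembleD_last] at this
    simp at this; omega
  have hcof : IsCoflagD F d f := by
    constructor
    · intro i
      have hlt := i.isLt
      have := hcham.1 ⟨i.val + 1, by omega⟩
      rw [my_assembleD_mid hd P f H ⟨i.val + 1, by omega⟩ (by simp) (by simp; omega)] at this
      simp at this
      omega
    · intro i j hij
      have hi := i.isLt; have hj := j.isLt
      rw [Fin.le_def] at hij
      have h1 : assembleD F hd P f H ⟨i.val + 1, by omega⟩ = f i := by
        rw [my_assembleD_mid hd P f H ⟨i.val + 1, by omega⟩ (by simp) (by simp; omega)]
        exact congrArg f (Fin.ext (by simp))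
      have h2 : assembleD F hd P f H ⟨j.val + 1, by omega⟩ = f j := by
        rw [my_assembleD_mid hd P f H ⟨j.val + 1, by omega⟩ (by simp) (by simp; omega)]
        exact congrArg f (Fin.ext (by simp))
      have h3 := hcham.2 ⟨i.val + 1, by omega⟩ ⟨j.val + 1, by omega⟩ (Fin.mk_le_mk.mpr (by omega))
      rw [h1, h2] at h3
      exact h3
  have hPf : P ≤ f ⟨0, by omega⟩ := by
    have := hcham.2 ⟨0, by omega⟩ ⟨1, by omega⟩ (Fin.mk_le_mk.mpr (by omega))
    rw [my_assembleD_zero, my_assembleD_mid hd P f H ⟨1, by omega⟩ (by simp) (by simp; omega)] at this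
    have e1 : (⟨1 - 1, by omega⟩ : Fin (d-2)) = ⟨0, by omega⟩ := Fin.ext (by simp)
    rwa [e1] at this
  have hfH : f ⟨d - 3, by omega⟩ ≤ H := by
    have := hcham.2 ⟨d - 2, by omega⟩ ⟨d - 1, by omega⟩ (Fin.mk_le_mk.mpr (by omega))
    rw [my_assembleD_last, my_assembleD_mid hd P f H ⟨d - 2, by omega⟩ (by simp; omega) (by simp; omega)] at this
    rw [show (⟨d - 2 - 1, by omega⟩ : Fin (d-2)) = ⟨d - 3, by omega⟩ from Fin.ext (by simp; omega)] at this
    exact this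
  -- uniqueness from weight one
  have huniq : ∀ D ∈ M, coflagOf F hd D = f → D = assembleD F hd P f H := by
    intro D hD hcD
    obtain ⟨a, ha⟩ := Set.ncard_eq_one.mp hw
    have h1 : assembleD F hd P f H ∈ {C | C ∈ M ∧ coflagOf F hd C = f} :=
      ⟨hmem, my_coflagOf_assembleD hd P f H⟩
    have h2 : D ∈ {C | C ∈ M ∧ coflagOf F hd C = f} := ⟨hD, hcD⟩
    rw [ha] at h1 h2
    simp only [Set.mem_singleton_iff] at h1 h2
    exact h2.trans h1.symm
  -- the key construction
  have key : ∀ P' H' : Submodule F (Fin (d+1) → F),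
      finrank F P' = 1 → finrank F H' = d →
      P' ≤ f ⟨0, by omega⟩ → f ⟨d - 3, by omega⟩ ≤ H' →
      assembleD F hd P' f H' ≠ assembleD F hd P f H →
      ∃ D ∈ M, FOppD F d (coflagOf F hd D) f ∧
        pointOf F hd D ⊓ H' = ⊥ ∧ P' ⊓ hypOf F hd D = ⊥ ∧
        (P ⊓ hypOf F hd D ≠ ⊥ ∨ pointOf F hd D ⊓ H ≠ ⊥) := by
    intro P' H' hP'1 hH'd hP'f hfH' hne
    set C' : Fin d → Submodule F (Fin (d+1) → F) := assembleD F hd P' f H' with hC'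
    have hcham' : IsChamberD F d C' := my_isChamberD_assembleD hd hP'1 hH'd hcof hP'f hfH'
    have hnotM : C' ∉ M := fun h => hne (huniq C' h (my_coflagOf_assembleD hd P' f H'))
    have hex : ∃ D ∈ M, OppD F d C' D := by
      by_contra hcon
      push_neg at hcon
      exact hnotM (hM.2 C' hcham' hcon)
    obtain ⟨D, hDM, hopp⟩ := hex
    have hDcham : IsChamberD F d D := hM.1.1 D hDM
    refine ⟨D, hDM, ?_, ?_, ?_, ?_⟩
    · have := my_fOpp_of_opp hd hcham' hDcham (my_oppD_symm hopp)
      rwa [my_coflagOf_assembleD hd P' f H'] at this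
    · -- pointOf D ⊓ H' = ⊥ : from Opp C' D at i = d-1
      have hz := hopp ⟨d - 1, by omega⟩
      simp only at hz
      rw [show C' ⟨d-1, by omega⟩ = H' from my_assembleD_last hd P' f H'] at hz
      rw [show (⟨d - 1 - (d - 1), by omega⟩ : Fin d) = ⟨0, by omega⟩ from Fin.ext (by simp)] at hz
      rw [pointOf, inf_comm]
      exact hz
    · -- P' ⊓ hypOf D = ⊥ : from Opp C' D at i = 0
      have hz := hopp ⟨0, by omega⟩
      simp only at hz
      rw [show C' ⟨0, by omega⟩ = P' from my_assembleD_zero hd P' f H'] at hz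
      rw [hypOf]
      rw [show (⟨d - 1, by omega⟩ : Fin d) = ⟨d - 1 - 0, by omega⟩ from Fin.ext (by simp)]
      exact hz
    · -- disjunction from ¬ Opp C D
      have hnopp : ¬ OppD F d (assembleD F hd P f H) D := hM.1.2 _ hmem D hDM
      by_contra hcon
      push_neg at hcon
      apply hnopp
      intro i
      have hi := i.isLt
      by_cases h0 : i.val = 0
      · rw [show i = (⟨0, by omega⟩ : Fin d) from Fin.ext h0]
        simp only
        rw [my_assembleD_zero hd P f H]
        rw [show (⟨d - 1 - 0, by omega⟩ : Fin d) = ⟨d - 1, by omega⟩ from Fin.ext (by simp)]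
        exact hcon.1
      · by_cases h1 : i.val = d - 1
        · rw [show i = (⟨d-1, by omega⟩ : Fin d) from Fin.ext h1]
          simp only
          rw [my_assembleD_last hd P f H]
          rw [show (⟨d - 1 - (d-1), by omega⟩ : Fin d) = ⟨0, by omega⟩ from Fin.ext (by simp)]
          rw [inf_comm]
          exact hcon.2
        · have hz := hopp i
          rw [show C' i = f ⟨i.val - 1, by omega⟩ from my_assembleD_mid hd P' f H' i h0 h1] at hz
          rw [my_assembleD_mid hd P f H i h0 h1]
          exact hz
  -- First chamber: pick P' ≤ f 0 with P' ≠ P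
  have hlt : P < f ⟨0, by omega⟩ := lt_of_le_of_ne hPf (by
    intro h
    have := hcof.1 ⟨0, by omega⟩
    rw [← h, hP1] at this
    simp at this)
  obtain ⟨v, hvf, hvP⟩ := SetLike.exists_of_lt hlt
  have hv0 : v ≠ 0 := fun h => hvP (h ▸ P.zero_mem)
  set P' := Submodule.span F {v} with hP'
  have hP'1 : finrank F P' = 1 := finrank_span_singleton hv0
  have hP'f : P' ≤ f ⟨0, by omega⟩ := Submodule.span_le.mpr (by simpa using hvf)
  have hne1 : assembleD F hd P' f H ≠ assembleD F hd P f H := by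
    intro h
    have := congrFun h ⟨0, by omega⟩
    rw [my_assembleD_zero, my_assembleD_zero] at this
    exact hvP (this ▸ Submodule.mem_span_singleton_self v)
  obtain ⟨D₁, hD₁M, hfopp₁, hq₁, hp₁, hdis₁⟩ := key P' H hP'1 hHd hP'f hfH hne1
  -- Second chamber: pick H'' ⊇ f(d-3) with H'' ≠ H
  have hHtop : H ≠ ⊤ := by
    intro h
    rw [h] at hHd
    rw [finrank_top, Module.finrank_fin_fun] at hHd
    omega
  obtain ⟨w, -, hwH⟩ := SetLike.exists_of_lt (show H < (⊤ : Submodule F (Fin (d+1) → F)) from lt_top_iff_ne_top.mpr hHtop)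
  have hw0 : w ≠ 0 := fun h => hwH (h ▸ H.zero_mem)
  have hwf : w ∉ f ⟨d - 3, by omega⟩ := fun h => hwH (hfH h)
  set H'' := f ⟨d - 3, by omega⟩ ⊔ Submodule.span F {w} with hH''
  have hH''d : finrank F H'' = d := by
    have heq := Submodule.finrank_sup_add_finrank_inf_eq (f ⟨d - 3, by omega⟩) (Submodule.span F {w})
    rw [my_inf_span_eq_bot hwf, finrank_bot, finrank_span_singleton hw0, hcof.1] at heq
    simp at heq
    rw [hH'']
    omega
  have hfH'' : f ⟨d - 3, by omega⟩ ≤ H'' := le_sup_left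
  have hne2 : assembleD F hd P f H'' ≠ assembleD F hd P f H := by
    intro h
    have := congrFun h ⟨d - 1, by omega⟩
    rw [my_assembleD_last, my_assembleD_last] at this
    exact hwH (this ▸ (le_sup_right (a := f ⟨d-3, by omega⟩)
      (Submodule.mem_span_singleton_self w)))
  obtain ⟨D₂, hD₂M, hfopp₂, hq₂, hp₂, hdis₂⟩ := key P H'' hP1 hH''d hPf hfH'' hne2
  -- dimensions of points of D₁, D₂
  have hQ₁ : finrank F (pointOf F hd D₁) = 1 := by
    have := (hM.1.1 D₁ hD₁M).1 ⟨0, by omega⟩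
    exact this
  have hQ₂ : finrank F (pointOf F hd D₂) = 1 := by
    have := (hM.1.1 D₂ hD₂M).1 ⟨0, by omega⟩
    exact this
  refine ⟨D₁, hD₁M, D₂, hD₂M, hfopp₁, hfopp₂, ?_, ?_, ?_, ?_⟩
  · -- P ≤ hypOf D₁
    rcases hdis₁ with h | h
    · exact my_dim1_le hP1 h
    · exact absurd hq₁ h
  · -- ¬ pointOf D₁ ≤ H
    exact my_dim1_not_le hQ₁ hq₁
  · -- ¬ P ≤ hypOf D₂
    exact my_dim1_not_le hP1 hp₂
  · -- pointOf D₂ ≤ H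
    rcases hdis₂ with h | h
    · exact absurd hp₂ h
    · exact my_dim1_le hQ₂ h
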